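/- For all positive integers i, j, k, there exists a bipartite tournament whose niche graph is the disjoint union K_i ∪ K_j ∪ K_k, with one partite set of size i+j inducing K_i ∪ K_j and the other of size k inducing K_k. -/

import Mathlib

structure BipTournament (α : Type*) where
  U : Set α
  V : Set α
  A : α → α → Prop
  disj : Disjoint U V
  cover : U ∪ V = Set.univ
  orient : ∀ u ∈ U, ∀ v ∈ V, Xor' (A u v) (A v u)
  arcs : ∀ x y, A x y → (x ∈ U ∧ y ∈ V) ∨ (x ∈ V ∧ y ∈ U)

def BipTournament.outN {α : Type*} (D : BipTournament α) (x : α) : Set α := {y | D.A x y}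

def BipTournament.inN {α : Type*} (D : BipTournament α) (x : α) : Set α := {y | D.A y x}

def BipTournament.niche {α : Type*} (D : BipTournament α) : SimpleGraph α where
  Adj x y := x ≠ y ∧ ((∃ w, D.A x w ∧ D.A y w) ∨ (∃ w, D.A w x ∧ D.A w y))
  symm := by
    refine ⟨?_⟩
    rintro x y ⟨h, h'⟩
    exact ⟨h.symm, h'.imp (fun ⟨w, a, b⟩ => ⟨w, b, a⟩) (fun ⟨w, a, b⟩ => ⟨w, b, a⟩)⟩
  loopless := ⟨fun x h => h.1 rfl⟩

theorem stmt12 (i j k : ℕ) (hi : 0 < i) (hj : 0 < j) (hk : 0 < k) :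
    ∃ D : BipTournament (Fin (i + j) ⊕ Fin k),
      D.U = Set.range Sum.inl ∧ D.V = Set.range Sum.inr ∧
      D.niche = SimpleGraph.fromRel (fun x y =>
        match x, y with
        | Sum.inl a, Sum.inl b => (a.val < i ∧ b.val < i) ∨ (i ≤ a.val ∧ i ≤ b.val)
        | Sum.inr _, Sum.inr _ => True
        | _, _ => False) := by
  refine ⟨⟨Set.range Sum.inl, Set.range Sum.inr,
    fun x y => match x, y with
      | Sum.inl a, Sum.inr _ => a.val < i
      | Sum.inr _, Sum.inl a => i ≤ a.val
      | _, _ => False, ?_, ?_, ?_, ?_⟩, rfl, rfl, ?_⟩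
  · rw [Set.disjoint_left]; rintro _ ⟨a, rfl⟩ ⟨b, h⟩; cases h
  · ext x; cases x with
    | inl a => simp
    | inr b => simp
  · rintro _ ⟨a, rfl⟩ _ ⟨b, rfl⟩
    simp only []
    rcases lt_or_ge a.val i with h | h
    · exact Or.inl ⟨h, fun h' => absurd h (not_lt.mpr h')⟩
    · exact Or.inr ⟨h, not_lt.mpr h⟩
  · rintro x y h
    cases x with
    | inl a => cases y with
      | inl b => exact absurd h id
      | inr b => exact Or.inl ⟨⟨a, rfl⟩, ⟨b, rfl⟩⟩
    | inr a => cases y with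
      | inl b => exact Or.inr ⟨⟨a, rfl⟩, ⟨b, rfl⟩⟩
      | inr b => exact absurd h id
  · ext x y
    simp only [BipTournament.niche, SimpleGraph.fromRel_adj]
    constructor
    · rintro ⟨hne, h⟩
      refine ⟨hne, ?_⟩
      cases x with
      | inl a => cases y with
        | inl b =>
          left
          rcases h with ⟨w, hw1, hw2⟩ | ⟨w, hw1, hw2⟩
          · cases w with
            | inl c => exact absurd hw1 id
            | inr c => exact Or.inl ⟨hw1, hw2⟩
          · cases w with
            | inl c => exact absurd hw1 id
            | inr c => exact Or.inr ⟨hw1, hw2⟩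
        | inr b =>
          exfalso
          rcases h with ⟨w, hw1, hw2⟩ | ⟨w, hw1, hw2⟩ <;>
            cases w <;> first | exact hw1 | exact hw2
      | inr a => cases y with
        | inl b =>
          exfalso
          rcases h with ⟨w, hw1, hw2⟩ | ⟨w, hw1, hw2⟩ <;>
            cases w <;> first | exact hw1 | exact hw2
        | inr b => exact Or.inl trivial
    · rintro ⟨hne, h⟩
      refine ⟨hne, ?_⟩
      cases x with
      | inl a => cases y with
        | inl b =>
          have h' : (a.val < i ∧ b.val < i) ∨ (i ≤ a.val ∧ i ≤ b.val) := by
            rcases h with h | h <;> [exact h; exact h.imp And.symm And.symm]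
          rcases h' with ⟨ha, hb⟩ | ⟨ha, hb⟩
          · exact Or.inl ⟨Sum.inr ⟨0, hk⟩, ha, hb⟩
          · exact Or.inr ⟨Sum.inr ⟨0, hk⟩, ha, hb⟩
        | inr b => exact absurd h (by rintro (h | h) <;> exact h)
      | inr a => cases y with
        | inl b => exact absurd h (by rintro (h | h) <;> exact h)
        | inr b =>
          exact Or.inr ⟨Sum.inl ⟨0, lt_of_lt_of_le hi (Nat.le_add_right i j)⟩, hi, hi⟩
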